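/- Let R be a commutative Noetherian ring, M a finitely generated R-module, and S a commutative R-algebra that is flat as an R-module. If M is reflexive over R, i.e. the natural evaluation map M → Hom_R(Hom_R(M, R), R) is bijective, then M ⊗_R S is reflexive over S, i.e. the natural evaluation map (M ⊗_R S) → Hom_S(Hom_S(M ⊗_R S, S), S) is bijective. -/

import Mathlib

open TensorProduct

open TensorProduct LinearMap

section
variable (R A : Type*) [CommRing R] [CommRing A] [Algebra R A]
variable {M N : Type*} [AddCommGroup M] [Module R M] [AddCommGroup N] [Module R N]

lemma tp_tmul (a : A) (f : M →ₗ[R] N) :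
    LinearMap.tensorProduct R A M N (a ⊗ₜ[R] f) = a • f.baseChange A := rfl

lemma tp_free_bijective {ι : Type*} [Fintype ι] [DecidableEq ι] {F : Type*}
    [AddCommGroup F] [Module R F] (b : Module.Basis ι R F) :
    Function.Bijective (LinearMap.tensorProduct R A F N) := by
  let e1 : A ⊗[R] (F →ₗ[R] N) ≃ₗ[A] A ⊗[R] (ι → N) :=
    LinearEquiv.baseChange R A _ _ (b.constr R (M' := N)).symm
  let e2 : A ⊗[R] (ι → N) ≃ₗ[A] (ι → A ⊗[R] N) := TensorProduct.piRight R A A _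
  let e3 : (ι → A ⊗[R] N) ≃ₗ[A] ((A ⊗[R] F) →ₗ[A] A ⊗[R] N) := (b.baseChange A).constr A
  have heq : (LinearMap.tensorProduct R A F N) =
      (e3.toLinearMap ∘ₗ e2.toLinearMap ∘ₗ e1.toLinearMap) := by
    apply LinearMap.restrictScalars_injective R
    apply TensorProduct.ext'
    intro a f
    apply Module.Basis.ext (b.baseChange A)
    intro i
    rw [LinearMap.restrictScalars_apply, LinearMap.restrictScalars_apply, tp_tmul]
    simp only [LinearMap.coe_comp, Function.comp_apply, LinearEquiv.coe_coe]
    have h1 : e1 (a ⊗ₜ[R] f) = a ⊗ₜ[R] (fun j => f (b j)) := by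
      simp only [e1, LinearEquiv.baseChange, TensorProduct.AlgebraTensorModule.congr_tmul,
        LinearEquiv.refl_apply]
      congr 1
    rw [h1]
    rw [show e2 (a ⊗ₜ[R] (fun j => f (b j))) = fun j => a ⊗ₜ[R] f (b j) by
      simp [e2]]
    rw [show (e3 fun j => a ⊗ₜ[R] f (b j)) ((b.baseChange A) i) = a ⊗ₜ[R] f (b i) from
      Module.Basis.constr_basis _ _ _ _]
    simp [Module.Basis.baseChange_apply, smul_tmul']
  rw [heq]
  simp only [LinearMap.coe_comp, LinearEquiv.coe_coe]
  exact e3.bijective.comp (e2.bijective.comp e1.bijective)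

lemma tp_natural {M' : Type*} [AddCommGroup M'] [Module R M'] (u : M' →ₗ[R] M)
    (x : A ⊗[R] (M →ₗ[R] N)) :
    LinearMap.tensorProduct R A M' N (((LinearMap.lcomp R N u)).lTensor A x)
      = (LinearMap.tensorProduct R A M N x).comp (u.baseChange A) := by
  induction x using TensorProduct.induction_on with
  | zero => simp
  | tmul a f =>
    rw [LinearMap.lTensor_tmul, tp_tmul]
    have h : (LinearMap.lcomp R N u) f = f ∘ₗ u := rfl
    rw [h, tp_tmul, LinearMap.baseChange_comp, LinearMap.smul_comp]
  | add x y hx hy =>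
    rw [map_add, map_add, map_add, hx, hy, LinearMap.add_comp]

lemma tp_bijective [IsNoetherianRing R] [Module.Flat R A] [Module.Finite R M] :
    Function.Bijective (LinearMap.tensorProduct R A M N) := by
  obtain ⟨n, g, hg⟩ := Module.Finite.exists_fin' R M
  have hker : Module.Finite R (LinearMap.ker g) := ⟨IsNoetherian.noetherian _⟩
  obtain ⟨m, q, hq⟩ := Module.Finite.exists_fin' R (LinearMap.ker g)
  set p : (Fin m → R) →ₗ[R] (Fin n → R) := (LinearMap.ker g).subtype ∘ₗ q with hp
  have hrange : LinearMap.range p = LinearMap.ker g := by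
    rw [hp, LinearMap.range_comp, LinearMap.range_eq_top.mpr hq, Submodule.map_top,
      Submodule.range_subtype]
  have hgp : g ∘ₗ p = 0 := by
    apply LinearMap.ext; intro w
    have : p w ∈ LinearMap.ker g := hrange ▸ LinearMap.mem_range_self p w
    simpa using this
  set g' : (M →ₗ[R] N) →ₗ[R] ((Fin n → R) →ₗ[R] N) := LinearMap.lcomp R N g with hg'
  set f' : ((Fin n → R) →ₗ[R] N) →ₗ[R] ((Fin m → R) →ₗ[R] N) := LinearMap.lcomp R N p with hf'
  have hg'inj : Function.Injective g' := by
    intro a b hab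
    ext z
    obtain ⟨w, rfl⟩ := hg z
    exact LinearMap.congr_fun hab w
  have hexact' : Function.Exact g' f' := by
    intro h
    constructor
    · intro hh
      have hle : LinearMap.ker g ≤ LinearMap.ker h := by
        rw [← hrange]
        rintro _ ⟨w, rfl⟩
        exact LinearMap.congr_fun hh w
      refine ⟨(Submodule.liftQ (LinearMap.ker g) h hle) ∘ₗ
        (g.quotKerEquivOfSurjective hg).symm.toLinearMap, ?_⟩
      have hsymm : (g.quotKerEquivOfSurjective hg).symm.toLinearMap ∘ₗ g
          = (LinearMap.ker g).mkQ := by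
        apply LinearMap.ext; intro w
        apply (g.quotKerEquivOfSurjective hg).injective
        simp [LinearMap.quotKerEquivOfSurjective]
      have h3 : g' ((Submodule.liftQ (LinearMap.ker g) h hle) ∘ₗ
          (g.quotKerEquivOfSurjective hg).symm.toLinearMap)
          = (Submodule.liftQ (LinearMap.ker g) h hle) ∘ₗ
            ((g.quotKerEquivOfSurjective hg).symm.toLinearMap ∘ₗ g) := rfl
      rw [h3, hsymm, Submodule.liftQ_mkQ]
    · rintro ⟨h', rfl⟩
      have h2 : f' (g' h') = h' ∘ₗ (g ∘ₗ p) := rfl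
      rw [h2, hgp, LinearMap.comp_zero]
  have hTinj : Function.Injective (g'.lTensor A) :=
    Module.Flat.lTensor_preserves_injective_linearMap g' hg'inj
  have hTexact : Function.Exact (g'.lTensor A) (f'.lTensor A) :=
    Module.Flat.lTensor_exact A hexact'
  have hb0 := tp_free_bijective R A (N := N) (Pi.basisFun R (Fin n))
  have hb1 := tp_free_bijective R A (N := N) (Pi.basisFun R (Fin m))
  have hgsurj : Function.Surjective (g.baseChange A) := by
    rw [show (⇑(g.baseChange A)) = ⇑(g.lTensor A) from rfl]
    exact LinearMap.lTensor_surjective A hg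
  constructor
  · intro x y hxy
    apply hTinj
    apply hb0.injective
    rw [tp_natural, tp_natural, hxy]
  · intro y
    obtain ⟨u, hu⟩ := hb0.surjective (y.comp (g.baseChange A))
    have h1 : f'.lTensor A u = 0 := by
      apply hb1.injective
      rw [map_zero, tp_natural, hu, LinearMap.comp_assoc, ← LinearMap.baseChange_comp, hgp,
        LinearMap.baseChange_zero, LinearMap.comp_zero]
    obtain ⟨x, hx⟩ := (hTexact u).mp h1
    refine ⟨x, ?_⟩
    have h2 : (LinearMap.tensorProduct R A M N x) ∘ₗ (g.baseChange A)
        = y ∘ₗ (g.baseChange A) := by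
      rw [← tp_natural, hx, hu]
    apply LinearMap.ext; intro z
    obtain ⟨w, rfl⟩ := hgsurj z
    exact LinearMap.congr_fun h2 w
end

section psi
variable (R A : Type*) [CommRing R] [IsNoetherianRing R] [CommRing A] [Algebra R A]
  [Module.Flat R A]

/-- Base change of the dual, as an equivalence, for a finite module over a Noetherian ring
and a flat algebra. -/
noncomputable def psiEquiv (W : Type*) [AddCommGroup W] [Module R W] [Module.Finite R W] :
    (A ⊗[R] Module.Dual R W) ≃ₗ[A] Module.Dual A (A ⊗[R] W) :=
  (LinearEquiv.ofBijective _ (tp_bijective R A (M := W) (N := R))).trans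
    (LinearEquiv.congrRight (TensorProduct.AlgebraTensorModule.rid R A A))

lemma psiEquiv_tmul_apply {W : Type*} [AddCommGroup W] [Module R W] [Module.Finite R W]
    (a : A) (f : Module.Dual R W) (b : A) (w : W) :
    psiEquiv R A W (a ⊗ₜ[R] f) (b ⊗ₜ[R] w) = f w • (a * b) := by
  have h0 : (LinearMap.tensorProduct R A W R (a ⊗ₜ[R] f)) (b ⊗ₜ[R] w) = (a * b) ⊗ₜ[R] f w := by
    rw [tp_tmul, LinearMap.smul_apply, LinearMap.baseChange_tmul, smul_tmul', smul_eq_mul]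
  show TensorProduct.AlgebraTensorModule.rid R A A
      ((LinearMap.tensorProduct R A W R (a ⊗ₜ[R] f)) (b ⊗ₜ[R] w)) = f w • (a * b)
  rw [h0, TensorProduct.AlgebraTensorModule.rid_tmul]

lemma psi_eval {M : Type*} [AddCommGroup M] [Module R M] [Module.Finite R M]
    (s : A) (m : M) (z : A ⊗[R] Module.Dual R M) :
    haveI : Module.Finite R (Module.Dual R M) := ⟨IsNoetherian.noetherian _⟩
    psiEquiv R A (Module.Dual R M) (s ⊗ₜ[R] (Module.Dual.eval R M m)) z
      = psiEquiv R A M z (s ⊗ₜ[R] m) := by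
  haveI : Module.Finite R (Module.Dual R M) := ⟨IsNoetherian.noetherian _⟩
  induction z using TensorProduct.induction_on with
  | zero => rw [map_zero, map_zero, LinearMap.zero_apply]
  | tmul t f =>
    rw [psiEquiv_tmul_apply, psiEquiv_tmul_apply]
    simp [Module.Dual.eval, mul_comm]
  | add x y hx hy => rw [map_add, map_add, LinearMap.add_apply, hx, hy]

end psi


/-- If `R` is Noetherian, `M` a finitely generated `R`-module, and `S` a flat commutative
`R`-algebra, then reflexivity of `M` over `R` (bijectivity of the evaluation map into the
double dual) implies reflexivity of `S ⊗_R M` over `S`. -/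
theorem stmt1 (R S M : Type*) [CommRing R] [IsNoetherianRing R] [CommRing S] [Algebra R S]
    [Module.Flat R S] [AddCommGroup M] [Module R M] [Module.Finite R M]
    (h : Function.Bijective (Module.Dual.eval R M)) :
    Function.Bijective (Module.Dual.eval S (S ⊗[R] M)) := by
  haveI : Module.Finite R (Module.Dual R M) := ⟨IsNoetherian.noetherian _⟩
  let ΨM := psiEquiv R S M
  let ΨDD := psiEquiv R S (Module.Dual R M)
  let E0 : S ⊗[R] M ≃ₗ[S] S ⊗[R] (Module.Dual R (Module.Dual R M)) :=
    LinearEquiv.baseChange R S _ _ (LinearEquiv.ofBijective _ h)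
  let E : S ⊗[R] M ≃ₗ[S] Module.Dual S (Module.Dual S (S ⊗[R] M)) :=
    E0.trans (ΨDD.trans (ΨM.symm.dualMap))
  have key : ∀ z : S ⊗[R] M, Module.Dual.eval S (S ⊗[R] M) z = E z := by
    intro z
    induction z using TensorProduct.induction_on with
    | zero => simp
    | tmul s m =>
      apply LinearMap.ext
      intro ξ
      have hE0 : E0 (s ⊗ₜ[R] m) = s ⊗ₜ[R] (Module.Dual.eval R M m) := by
        simp [E0, LinearEquiv.baseChange]
      have : E (s ⊗ₜ[R] m) ξ = ΨDD (s ⊗ₜ[R] (Module.Dual.eval R M m)) (ΨM.symm ξ) := by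
        simp only [E, LinearEquiv.trans_apply, hE0]
        rfl
      rw [this, psi_eval, LinearEquiv.apply_symm_apply]
      rfl
    | add x y hx hy => rw [map_add, map_add, hx, hy]
  have : Function.Bijective E := E.bijective
  rwa [show (⇑(Module.Dual.eval S (S ⊗[R] M))) = ⇑E from funext key]
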